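/- For 0 ≤ r, s < 1, the supremum R(ab, r, s) of rot~(ρ(ab)) over representations ρ : F₂ → Homeo⁺(S¹)~ with rot~(ρ(a)) = r, rot~(ρ(b)) = s satisfies the lower bound R(ab, r, s) ≥ sup over all rationals p₁/q ≤ r and p₂/q ≤ s (same denominator q ≥ 1) of (p₁ + p₂ + 1)/q. -/

import Mathlib

open CircleDeg1Lift Set Filter

namespace JNaux

/-- Two-piece PL homeomorphism of `[0,1]` sending `a` to `b`. -/
noncomputable def pl (a b t : ℝ) : ℝ :=
  if t ≤ a then b * t / a else b + (1 - b) * (t - a) / (1 - a)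

structure Good (a b : ℝ) : Prop where
  ha0 : 0 < a
  ha1 : a < 1
  hb0 : 0 < b
  hb1 : b < 1

lemma Good.symm {a b : ℝ} (h : Good a b) : Good b a := ⟨h.hb0, h.hb1, h.ha0, h.ha1⟩

variable {a b : ℝ}

lemma pl_zero (h : Good a b) : pl a b 0 = 0 := by
  simp [pl, h.ha0.le]

lemma pl_self (h : Good a b) : pl a b a = b := by
  rw [pl, if_pos le_rfl, mul_div_assoc, div_self h.ha0.ne', mul_one]

lemma pl_nonneg (h : Good a b) {t : ℝ} (ht : 0 ≤ t) : 0 ≤ pl a b t := by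
  unfold pl; split
  · exact div_nonneg (mul_nonneg h.hb0.le ht) h.ha0.le
  · rename_i hta
    have : a ≤ t := le_of_not_ge hta
    have h1a : (0:ℝ) < 1 - a := by linarith [h.ha1]
    have : 0 ≤ (1 - b) * (t - a) / (1 - a) :=
      div_nonneg (mul_nonneg (by linarith [h.hb1]) (by linarith)) h1a.le
    linarith [h.hb0]

lemma pl_lt_one (h : Good a b) {t : ℝ} (ht : t < 1) : pl a b t < 1 := by
  unfold pl; split
  · rename_i hta
    have : b * t / a ≤ b := by
      rw [div_le_iff₀ h.ha0]
      nlinarith [h.hb0]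
    linarith [h.hb1]
  · rename_i hta
    have hat : a < t := lt_of_not_ge hta
    have h1a : (0:ℝ) < 1 - a := by linarith [h.ha1]
    have : (1 - b) * (t - a) / (1 - a) < 1 - b := by
      rw [div_lt_iff₀ h1a]
      nlinarith [h.hb1]
    linarith

lemma pl_mono (h : Good a b) {s t : ℝ} (hs : 0 ≤ s) (hst : s ≤ t) : pl a b s ≤ pl a b t := by
  have h1a : (0:ℝ) < 1 - a := by linarith [h.ha1]
  have h1b : (0:ℝ) ≤ 1 - b := by linarith [h.hb1]
  unfold pl
  by_cases hsa : s ≤ a <;> by_cases hta : t ≤ a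
  · rw [if_pos hsa, if_pos hta]
    gcongr <;> first | exact h.ha0.le | exact h.hb0.le | exact h.ha0 | linarith
  · rw [if_pos hsa, if_neg hta]
    have hat : a < t := lt_of_not_ge hta
    have h1 : b * s / a ≤ b := by
      rw [div_le_iff₀ h.ha0]; nlinarith [h.hb0]
    have h2 : 0 ≤ (1 - b) * (t - a) / (1 - a) :=
      div_nonneg (mul_nonneg h1b (by linarith)) h1a.le
    linarith
  · exact absurd (hst.trans hta) hsa
  · rw [if_neg hsa, if_neg hta]
    have := lt_of_not_ge hsa
    gcongr <;> first | exact h1b | exact h1a | linarith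

lemma pl_pl (h : Good a b) {t : ℝ} (ht0 : 0 ≤ t) (ht1 : t ≤ 1) :
    pl a b (pl b a t) = t := by
  have h1a : (0:ℝ) < 1 - a := by linarith [h.ha1]
  have h1b : (0:ℝ) < 1 - b := by linarith [h.hb1]
  rcases le_or_gt t b with htb | htb
  · have hv : pl b a t = a * t / b := if_pos htb
    have hva : a * t / b ≤ a := by
      rw [div_le_iff₀ h.hb0]; nlinarith [h.ha0]
    have ha := h.ha0.ne'
    have hb := h.hb0.ne'
    rw [hv, pl, if_pos hva]
    field_simp
  · have hv : pl b a t = a + (1 - a) * (t - b) / (1 - b) := if_neg (not_le.2 htb)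
    have hva : ¬ (a + (1 - a) * (t - b) / (1 - b) ≤ a) := by
      rw [not_le]
      have : 0 < (1 - a) * (t - b) / (1 - b) :=
        div_pos (mul_pos h1a (by linarith)) h1b
      linarith
    have ha := h1a.ne'
    have hb := h1b.ne'
    rw [hv, pl, if_neg hva]
    field_simp
    ring

/-- The PL map extended to a degree-one lift of the circle. -/
noncomputable def plf (a b : ℝ) (x : ℝ) : ℝ := ⌊x⌋ + pl a b (Int.fract x)

lemma plf_eq (h : Good a b) {t : ℝ} (ht0 : 0 ≤ t) (ht1 : t < 1) :
    plf a b t = pl a b t := by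
  rw [plf, Int.fract_eq_self.2 ⟨ht0, ht1⟩, Int.floor_eq_zero_iff.2 ⟨ht0, ht1⟩]
  simp

lemma plf_mono (h : Good a b) : Monotone (plf a b) := by
  intro x y hxy
  rcases eq_or_lt_of_le (Int.floor_mono hxy) with hf | hf
  · unfold plf
    rw [hf]
    have : Int.fract x ≤ Int.fract y := by
      unfold Int.fract; rw [← hf] at *; linarith [hf]
    gcongr
    exact pl_mono h (Int.fract_nonneg x) this
  · have h1 : plf a b x < ⌊x⌋ + 1 := by
      unfold plf
      have := pl_lt_one h (Int.fract_lt_one x)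
      linarith
    have h2 : (⌊x⌋:ℝ) + 1 ≤ ⌊y⌋ := by exact_mod_cast hf
    have h3 : (⌊y⌋:ℝ) ≤ plf a b y := by
      unfold plf
      have := pl_nonneg h (Int.fract_nonneg y)
      linarith
    linarith

lemma plf_add_one (x : ℝ) : plf a b (x + 1) = plf a b x + 1 := by
  unfold plf
  rw [Int.floor_add_one, Int.fract_add_one]
  push_cast
  ring

lemma plf_plf (h : Good a b) (x : ℝ) : plf a b (plf b a x) = x := by
  have hmem : pl b a (Int.fract x) ∈ Set.Ico (0:ℝ) 1 :=
    ⟨pl_nonneg h.symm (Int.fract_nonneg x), pl_lt_one h.symm (Int.fract_lt_one x)⟩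
  have : plf b a x = (⌊x⌋ : ℝ) + pl b a (Int.fract x) := rfl
  rw [this, plf, Int.floor_intCast_add, Int.fract_intCast_add,
    Int.floor_eq_zero_iff.2 hmem, Int.fract_eq_self.2 hmem,
    pl_pl h (Int.fract_nonneg x) (Int.fract_lt_one x).le]
  push_cast
  rw [add_zero, Int.floor_add_fract]

noncomputable def plLift (h : Good a b) : CircleDeg1Lift :=
  ⟨⟨plf a b, plf_mono h⟩, plf_add_one⟩

@[simp] lemma plLift_apply (h : Good a b) (x : ℝ) : plLift h x = plf a b x := rfl

noncomputable def plUnit (h : Good a b) : CircleDeg1Liftˣ where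
  val := plLift h
  inv := plLift h.symm
  val_inv := CircleDeg1Lift.ext fun x => plf_plf h x
  inv_val := CircleDeg1Lift.ext fun x => plf_plf h.symm x

@[simp] lemma plUnit_apply (h : Good a b) (x : ℝ) :
    ((plUnit h : CircleDeg1Liftˣ) : CircleDeg1Lift) x = plf a b x := rfl

@[simp] lemma plUnit_inv_apply (h : Good a b) (x : ℝ) :
    (((plUnit h)⁻¹ : CircleDeg1Liftˣ) : CircleDeg1Lift) x = plf b a x := rfl

end JNaux

namespace JNaux

/-- Rescaling a lift by `1/q`. -/
noncomputable def scaleF (q : ℕ) (hq : 0 < q) (f : CircleDeg1Lift) : CircleDeg1Lift :=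
  ⟨⟨fun x => f (q * x) / q, by
      intro x y hxy
      have hq' : (0:ℝ) < q := by exact_mod_cast hq
      have : f ((q:ℝ) * x) ≤ f ((q:ℝ) * y) := f.mono (by nlinarith)
      exact (div_le_div_iff_of_pos_right hq').mpr this⟩,
    fun x => by
      have hq' : (0:ℝ) < q := by exact_mod_cast hq
      show f ((q:ℝ) * (x + 1)) / q = f ((q:ℝ) * x) / q + 1
      rw [mul_add, mul_one, f.map_add_nat, add_div, div_self hq'.ne']⟩

@[simp] lemma scaleF_apply (q : ℕ) (hq : 0 < q) (f : CircleDeg1Lift) (x : ℝ) :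
    scaleF q hq f x = f (q * x) / q := rfl

end JNaux

namespace JNaux

variable {q : ℕ} (hq : 0 < q)

noncomputable def scaleU (q : ℕ) (hq : 0 < q) (f : CircleDeg1Liftˣ) : CircleDeg1Liftˣ where
  val := scaleF q hq f.val
  inv := scaleF q hq (f⁻¹ : CircleDeg1Liftˣ).val
  val_inv := by
    have hq' : (0:ℝ) < q := by exact_mod_cast hq
    refine CircleDeg1Lift.ext fun x => ?_
    rw [CircleDeg1Lift.mul_apply]
    simp only [scaleF_apply]
    rw [mul_div_cancel₀ _ hq'.ne']
    rw [CircleDeg1Lift.units_apply_inv_apply]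
    exact mul_div_cancel_left₀ x hq'.ne'
  inv_val := by
    have hq' : (0:ℝ) < q := by exact_mod_cast hq
    refine CircleDeg1Lift.ext fun x => ?_
    rw [CircleDeg1Lift.mul_apply]
    simp only [scaleF_apply]
    rw [mul_div_cancel₀ _ hq'.ne']
    rw [CircleDeg1Lift.units_inv_apply_apply]
    exact mul_div_cancel_left₀ x hq'.ne'

lemma scaleU_mul (f g : CircleDeg1Liftˣ) :
    scaleU q hq (f * g) = scaleU q hq f * scaleU q hq g := by
  have hq' : (0:ℝ) < q := by exact_mod_cast hq
  refine Units.ext (CircleDeg1Lift.ext fun x => ?_)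
  show scaleF q hq (f * g).val x = (scaleF q hq f.val * scaleF q hq g.val) x
  rw [CircleDeg1Lift.mul_apply]
  simp only [scaleF_apply, Units.val_mul, CircleDeg1Lift.mul_apply]
  rw [mul_div_cancel₀ _ hq'.ne']

lemma scaleF_pow (f : CircleDeg1Lift) (n : ℕ) :
    ((scaleF q hq f) ^ n) 0 = (f ^ n) 0 / q := by
  have hq' : (0:ℝ) < q := by exact_mod_cast hq
  induction n with
  | zero => simp
  | succ n ih =>
    rw [pow_succ', CircleDeg1Lift.mul_apply, ih, scaleF_apply,
      mul_div_cancel₀ _ hq'.ne', pow_succ', CircleDeg1Lift.mul_apply]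

lemma translationNumber_scaleF (f : CircleDeg1Lift) :
    (scaleF q hq f).translationNumber = f.translationNumber / q := by
  have hq' : (0:ℝ) < q := by exact_mod_cast hq
  refine (scaleF q hq f).translationNumber_eq_of_tendsto₀ ?_
  have h1 := (f.tendsto_translation_number₀).div_const (q:ℝ)
  refine h1.congr fun n => ?_
  rw [← CircleDeg1Lift.coe_pow]
  show (f ^ n) 0 / ↑n / ↑q = ((scaleF q hq f) ^ n) 0 / ↑n
  rw [scaleF_pow hq, div_right_comm]

lemma commute_translate_int (m : ℤ) (f : CircleDeg1Lift) :
    Commute ((translate (Multiplicative.ofAdd (m:ℝ))) : CircleDeg1Lift) f := by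
  refine CircleDeg1Lift.ext fun x => ?_
  simp only [CircleDeg1Lift.mul_apply, translate_apply]
  exact (f.map_int_add m x).symm

/-- Gadget A: a lift with translation number `ρ ∈ [0,1)` mapping `3/4` at least to `1`. -/
lemma gadgetA (ρ : ℝ) (h0 : 0 ≤ ρ) (h1 : ρ < 1) :
    ∃ ψ : CircleDeg1Liftˣ, (ψ : CircleDeg1Lift).translationNumber = ρ ∧
      (1:ℝ) ≤ (ψ : CircleDeg1Lift) (3/4) := by
  rcases h0.eq_or_lt with hz | hpos
  · -- ρ = 0 : conjugate of a parabolic by a translation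
    have hgood : Good (1/2 : ℝ) (7/8 : ℝ) := ⟨by norm_num, by norm_num, by norm_num, by norm_num⟩
    refine ⟨translate (Multiplicative.ofAdd (1/4 : ℝ)) * plUnit hgood *
      (translate (Multiplicative.ofAdd (1/4 : ℝ)))⁻¹, ?_, ?_⟩
    · rw [Units.val_mul, Units.val_mul, translationNumber_conj_eq, ← hz]
      have h00 : (plLift hgood) 0 = 0 + ((0:ℤ):ℝ) := by
        show plf (1/2) (7/8) 0 = 0 + ((0:ℤ):ℝ)
        rw [plf_eq hgood le_rfl one_pos, pl_zero hgood]; norm_num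
      exact (by simpa using (plLift hgood).translationNumber_of_eq_add_int h00 :
        (plLift hgood).translationNumber = 0)
    · rw [Units.val_mul, Units.val_mul, CircleDeg1Lift.mul_apply, CircleDeg1Lift.mul_apply,
        CircleDeg1Lift.translate_inv_apply]
      have e : (-(1/4) + 3/4 : ℝ) = 1/2 := by norm_num
      rw [e]
      show (1:ℝ) ≤ (1/4 : ℝ) + plf (1/2) (7/8) (1/2)
      rw [plf_eq hgood (by norm_num) (by norm_num), pl_self hgood]
      norm_num
  · -- ρ > 0 : conjugate of the rotation by ρ
    have hgood : Good (1 - ρ) (3/4 : ℝ) := ⟨by linarith, by linarith, by norm_num, by norm_num⟩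
    refine ⟨plUnit hgood * translate (Multiplicative.ofAdd ρ) *
      (plUnit hgood)⁻¹, ?_, ?_⟩
    · rw [Units.val_mul, Units.val_mul, translationNumber_conj_eq,
        translationNumber_translate]
    · rw [Units.val_mul, Units.val_mul, CircleDeg1Lift.mul_apply, CircleDeg1Lift.mul_apply]
      have e1 : ((plUnit hgood)⁻¹ : CircleDeg1Liftˣ).val (3/4) = 1 - ρ := by
        show plf (3/4) (1 - ρ) (3/4) = 1 - ρ
        rw [plf_eq hgood.symm (by norm_num) (by norm_num), pl_self hgood.symm]
      rw [e1, CircleDeg1Lift.translate_apply]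
      have e2 : (ρ + (1 - ρ) : ℝ) = 0 + 1 := by ring
      rw [e2]
      show (1:ℝ) ≤ plf (1 - ρ) (3/4) (0 + 1)
      rw [plf_add_one, plf_eq hgood le_rfl one_pos, pl_zero hgood]
      norm_num

/-- Gadget B: a lift with translation number `ρ ∈ [0,1)` mapping `0` at least to `3/4`. -/
lemma gadgetB (ρ : ℝ) (h0 : 0 ≤ ρ) (h1 : ρ < 1) :
    ∃ χ : CircleDeg1Liftˣ, (χ : CircleDeg1Lift).translationNumber = ρ ∧
      (3/4 : ℝ) ≤ (χ : CircleDeg1Lift) 0 := by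
  rcases h0.eq_or_lt with hz | hpos
  · have hgood : Good (1/8 : ℝ) (7/8 : ℝ) := ⟨by norm_num, by norm_num, by norm_num, by norm_num⟩
    refine ⟨translate (Multiplicative.ofAdd (7/8 : ℝ)) * plUnit hgood *
      (translate (Multiplicative.ofAdd (7/8 : ℝ)))⁻¹, ?_, ?_⟩
    · rw [Units.val_mul, Units.val_mul, translationNumber_conj_eq, ← hz]
      have h00 : (plLift hgood) 0 = 0 + ((0:ℤ):ℝ) := by
        show plf (1/8) (7/8) 0 = 0 + ((0:ℤ):ℝ)
        rw [plf_eq hgood le_rfl one_pos, pl_zero hgood]; norm_num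
      exact (by simpa using (plLift hgood).translationNumber_of_eq_add_int h00 :
        (plLift hgood).translationNumber = 0)
    · rw [Units.val_mul, Units.val_mul, CircleDeg1Lift.mul_apply, CircleDeg1Lift.mul_apply,
        CircleDeg1Lift.translate_inv_apply]
      have e : (-(7/8) + 0 : ℝ) = 1/8 - ((1:ℤ):ℝ) := by norm_num
      rw [e]
      have e0 := (plLift hgood).map_sub_int (1/8) 1
      show (3/4:ℝ) ≤ (7/8 : ℝ) + (plLift hgood) (1/8 - ((1:ℤ):ℝ))
      rw [e0]
      have e1 : (plLift hgood) (1/8 : ℝ) = 7/8 := by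
        show plf (1/8) (7/8) (1/8) = 7/8
        rw [plf_eq hgood (by norm_num) (by norm_num), pl_self hgood]
      rw [e1]
      norm_num
  · have hgood : Good ρ (3/4 : ℝ) := ⟨hpos, h1, by norm_num, by norm_num⟩
    refine ⟨plUnit hgood * translate (Multiplicative.ofAdd ρ) *
      (plUnit hgood)⁻¹, ?_, ?_⟩
    · rw [Units.val_mul, Units.val_mul, translationNumber_conj_eq,
        translationNumber_translate]
    · rw [Units.val_mul, Units.val_mul, CircleDeg1Lift.mul_apply, CircleDeg1Lift.mul_apply]
      have e1 : ((plUnit hgood)⁻¹ : CircleDeg1Liftˣ).val 0 = 0 := by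
        show plf (3/4) ρ 0 = 0
        rw [plf_eq hgood.symm le_rfl one_pos, pl_zero hgood.symm]
      rw [e1, CircleDeg1Lift.translate_apply, add_zero]
      show (3/4:ℝ) ≤ plf ρ (3/4) ρ
      rw [plf_eq hgood h0 h1, pl_self hgood]

end JNaux

namespace JNaux

lemma tau_le_map_zero_add_one (f : CircleDeg1Lift) : f.translationNumber ≤ f 0 + 1 := by
  have h := f.dist_map_zero_translationNumber_le
  rw [Real.dist_eq, abs_le] at h
  linarith [h.1]

lemma map_zero_le_tau_add_one (f : CircleDeg1Lift) : f 0 ≤ f.translationNumber + 1 := by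
  have h := f.dist_map_zero_translationNumber_le
  rw [Real.dist_eq, abs_le] at h
  linarith [h.2]

lemma tau_mul_le (f g : CircleDeg1Lift) :
    (f * g).translationNumber ≤ f.translationNumber + g.translationNumber + 4 := by
  have h1 := tau_le_map_zero_add_one (f * g)
  have h2 : (f * g) 0 < f 0 + g 0 + 1 := by
    rw [CircleDeg1Lift.mul_apply]
    exact f.map_map_zero_lt g
  have h3 := map_zero_le_tau_add_one f
  have h4 := map_zero_le_tau_add_one g
  linarith

/-- The key construction. -/
lemma key (r s : ℝ) (q : ℕ) (hq : 0 < q) :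
    ∃ F G : CircleDeg1Liftˣ,
      (F : CircleDeg1Lift).translationNumber = r ∧
      (G : CircleDeg1Lift).translationNumber = s ∧
      ((⌊(q:ℝ)*r⌋ : ℝ) + (⌊(q:ℝ)*s⌋ : ℝ) + 1) / q ≤
        ((F * G : CircleDeg1Liftˣ) : CircleDeg1Lift).translationNumber := by
  have hq' : (0:ℝ) < q := by exact_mod_cast hq
  obtain ⟨ψ, hψτ, hψv⟩ :=
    gadgetA (Int.fract ((q:ℝ)*r)) (Int.fract_nonneg _) (Int.fract_lt_one _)
  obtain ⟨χ, hχτ, hχv⟩ :=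
    gadgetB (Int.fract ((q:ℝ)*s)) (Int.fract_nonneg _) (Int.fract_lt_one _)
  set p₁ : ℤ := ⌊(q:ℝ)*r⌋ with hp₁
  set p₂ : ℤ := ⌊(q:ℝ)*s⌋ with hp₂
  set A : CircleDeg1Liftˣ := translate (Multiplicative.ofAdd ((p₁:ℝ))) * ψ with hA
  set B : CircleDeg1Liftˣ := translate (Multiplicative.ofAdd ((p₂:ℝ))) * χ with hB
  have hτA : (A : CircleDeg1Lift).translationNumber = (q:ℝ)*r := by
    rw [hA, Units.val_mul, translationNumber_mul_of_commute (commute_translate_int p₁ _),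
      translationNumber_translate, hψτ, hp₁, Int.floor_add_fract]
  have hτB : (B : CircleDeg1Lift).translationNumber = (q:ℝ)*s := by
    rw [hB, Units.val_mul, translationNumber_mul_of_commute (commute_translate_int p₂ _),
      translationNumber_translate, hχτ, hp₂, Int.floor_add_fract]
  -- displacement of A*B at 0
  have hAy : ∀ y, (A : CircleDeg1Lift) y = (p₁:ℝ) + (ψ : CircleDeg1Lift) y := fun y => by
    rw [hA, Units.val_mul, CircleDeg1Lift.mul_apply, CircleDeg1Lift.translate_apply]
  have hB0 : (B : CircleDeg1Lift) 0 = (p₂:ℝ) + (χ : CircleDeg1Lift) 0 := by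
    rw [hB, Units.val_mul, CircleDeg1Lift.mul_apply, CircleDeg1Lift.translate_apply]
  have hAB0 : (0:ℝ) + ((p₁ + p₂ + 1 : ℤ):ℝ) ≤ ((A * B : CircleDeg1Liftˣ) : CircleDeg1Lift) 0 := by
    rw [Units.val_mul, CircleDeg1Lift.mul_apply, hB0, hAy]
    have e : (ψ : CircleDeg1Lift) ((p₂:ℝ) + (χ : CircleDeg1Lift) 0)
        = (p₂:ℝ) + (ψ : CircleDeg1Lift) ((χ : CircleDeg1Lift) 0) :=
      (ψ : CircleDeg1Lift).map_int_add p₂ _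
    rw [e]
    have h1 : (1:ℝ) ≤ (ψ : CircleDeg1Lift) ((χ : CircleDeg1Lift) 0) :=
      hψv.trans ((ψ : CircleDeg1Lift).mono hχv)
    push_cast
    linarith
  have hτAB : ((p₁ + p₂ + 1 : ℤ):ℝ) ≤
      ((A * B : CircleDeg1Liftˣ) : CircleDeg1Lift).translationNumber :=
    CircleDeg1Lift.le_translationNumber_of_add_int_le _ hAB0
  refine ⟨scaleU q hq A, scaleU q hq B, ?_, ?_, ?_⟩
  · show (scaleF q hq (A : CircleDeg1Lift)).translationNumber = r
    rw [translationNumber_scaleF hq, hτA, mul_div_cancel_left₀ _ hq'.ne']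
  · show (scaleF q hq (B : CircleDeg1Lift)).translationNumber = s
    rw [translationNumber_scaleF hq, hτB, mul_div_cancel_left₀ _ hq'.ne']
  · rw [← scaleU_mul hq]
    show _ ≤ (scaleF q hq ((A * B : CircleDeg1Liftˣ) : CircleDeg1Lift)).translationNumber
    rw [translationNumber_scaleF hq]
    refine (div_le_div_iff_of_pos_right hq').mpr ?_
    push_cast at hτAB ⊢
    linarith

end JNaux

/-- The translation number of a lift of an orientation-preserving circle homeomorphism. -/
noncomputable def rotZ (f : CircleDeg1Liftˣ) : ℝ :=
  (f : CircleDeg1Lift).translationNumber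

/-- The generator `a` of the free group `F₂`. -/
def genA : FreeGroup Bool := FreeGroup.of true

/-- The generator `b` of the free group `F₂`. -/
def genB : FreeGroup Bool := FreeGroup.of false

/-- `R(w,r,s)`: the supremum of `rot~(ρ w)` over all representations
`ρ : F₂ → Homeo⁺(S¹)~` with `rot~(ρ a) = r` and `rot~(ρ b) = s`. -/
noncomputable def RR (w : FreeGroup Bool) (r s : ℝ) : ℝ :=
  sSup { t : ℝ | ∃ ρ : FreeGroup Bool →* CircleDeg1Liftˣ,
    rotZ (ρ genA) = r ∧ rotZ (ρ genB) = s ∧ rotZ (ρ w) = t }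

/-- The easy direction of the Jankins–Neumann/Naimi theorem: for `0 ≤ r, s < 1`,
`R(ab, r, s) ≥ sup { (p₁ + p₂ + 1)/q : p₁/q ≤ r, p₂/q ≤ s }`. -/
theorem RR_ab_ge_sup (r s : ℝ) (hr0 : 0 ≤ r) (hr1 : r < 1) (hs0 : 0 ≤ s) (hs1 : s < 1) :
    sSup { v : ℝ | ∃ (q : ℕ) (p₁ p₂ : ℤ), 1 ≤ q ∧
        (p₁ : ℝ) / q ≤ r ∧ (p₂ : ℝ) / q ≤ s ∧ v = ((p₁ : ℝ) + p₂ + 1) / q } ≤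
      RR (genA * genB) r s := by
  have hSne : { v : ℝ | ∃ (q : ℕ) (p₁ p₂ : ℤ), 1 ≤ q ∧
      (p₁ : ℝ) / q ≤ r ∧ (p₂ : ℝ) / q ≤ s ∧ v = ((p₁ : ℝ) + p₂ + 1) / q }.Nonempty := by
    refine ⟨1, 1, 0, 0, le_rfl, by simpa using hr0, by simpa using hs0, by norm_num⟩
  -- the target set of translation numbers
  set T := { t : ℝ | ∃ ρ : FreeGroup Bool →* CircleDeg1Liftˣ,
    rotZ (ρ genA) = r ∧ rotZ (ρ genB) = s ∧ rotZ (ρ (genA * genB)) = t } with hT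
  have hbdd : BddAbove T := by
    refine ⟨r + s + 4, ?_⟩
    rintro t ⟨σ, hA, hB, rfl⟩
    have : rotZ (σ (genA * genB)) =
        ((σ genA : CircleDeg1Lift) * (σ genB : CircleDeg1Lift)).translationNumber := by
      rw [rotZ, map_mul, Units.val_mul]
    rw [this]
    have := JNaux.tau_mul_le (σ genA : CircleDeg1Lift) (σ genB : CircleDeg1Lift)
    rw [show ((σ genA : CircleDeg1Lift)).translationNumber = r from hA,
      show ((σ genB : CircleDeg1Lift)).translationNumber = s from hB] at this
    exact this
  refine csSup_le hSne ?_
  rintro v ⟨q, p₁, p₂, hq1, hp1, hp2, rfl⟩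
  have hq : 0 < q := hq1
  have hq' : (0:ℝ) < q := by exact_mod_cast hq
  obtain ⟨F, G, hF, hG, hFG⟩ := JNaux.key r s q hq
  set ρ : FreeGroup Bool →* CircleDeg1Liftˣ :=
    FreeGroup.lift (fun i => if i then F else G) with hρ
  have hρa : ρ genA = F := by simp [hρ, genA]
  have hρb : ρ genB = G := by simp [hρ, genB]
  have hmem : rotZ (ρ (genA * genB)) ∈ T := by
    exact ⟨ρ, by rw [hρa]; exact hF, by rw [hρb]; exact hG, rfl⟩
  have hval : ((⌊(q:ℝ)*r⌋ : ℝ) + (⌊(q:ℝ)*s⌋ : ℝ) + 1) / q ≤ rotZ (ρ (genA * genB)) := by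
    rw [rotZ, map_mul, hρa, hρb]
    exact hFG
  have hfloor1 : (p₁ : ℝ) ≤ (⌊(q:ℝ)*r⌋ : ℝ) := by
    have : (p₁ : ℝ) ≤ (q:ℝ) * r := by
      rw [div_le_iff₀ hq'] at hp1
      linarith [hp1]
    exact_mod_cast Int.le_floor.mpr this
  have hfloor2 : (p₂ : ℝ) ≤ (⌊(q:ℝ)*s⌋ : ℝ) := by
    have : (p₂ : ℝ) ≤ (q:ℝ) * s := by
      rw [div_le_iff₀ hq'] at hp2
      linarith [hp2]
    exact_mod_cast Int.le_floor.mpr this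
  have step1 : ((p₁ : ℝ) + p₂ + 1) / q ≤ ((⌊(q:ℝ)*r⌋ : ℝ) + (⌊(q:ℝ)*s⌋ : ℝ) + 1) / q := by
    refine (div_le_div_iff_of_pos_right hq').mpr ?_
    linarith
  refine le_trans (step1.trans hval) ?_
  rw [RR]
  exact le_csSup hbdd hmem
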